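/- Let W ⊆ ℤ^m be a finite set such that cone(W) is m-dimensional, let s ≥ 1, and let W^1, …, W^s ⊆ W each consist of m linearly independent vectors with cone(W) = ⋃_{i=1}^s cone(W^i). Let Λ ⊆ ℤ^m be a full-rank sublattice of ℤ^m with W^i ⊆ Λ for every i. For each i choose nonnegative integers k_w (w ∈ W^i) and set z^i := Σ_{w∈W^i} k_w w. Then lim_{t→∞} |{−t,…,t}^m ∩ ⋃_{i=1}^s (Λ ∩ (cone(W^i) + z^i))| / |{−t,…,t}^m ∩ ⋃_{i=1}^s (Λ ∩ cone(W^i))| = 1. -/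

import Mathlib

/-- Componentwise cast of an integer vector to a real vector. -/
def castVec {m : ℕ} (b : Fin m → ℤ) : Fin m → ℝ := fun i => (b i : ℝ)

/-- The cone generated by a finite family of integer vectors, as a subset of `ℝ^m`. -/
def coneFam {m k : ℕ} (v : Fin k → (Fin m → ℤ)) : Set (Fin m → ℝ) :=
  {y | ∃ c : Fin k → ℝ, (∀ i, 0 ≤ c i) ∧ y = ∑ i, c i • castVec (v i)}

/-- The cone generated by a finite set of integer vectors, as a subset of `ℝ^m`. -/
def coneOfSet {m : ℕ} (V : Finset (Fin m → ℤ)) : Set (Fin m → ℝ) :=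
  {y | ∃ c : (Fin m → ℤ) → ℝ, (∀ v, 0 ≤ c v) ∧ y = ∑ v ∈ V, c v • castVec v}

lemma castVec_intComb {m k : ℕ} (v : Fin k → Fin m → ℤ) (n : Fin k → ℤ) :
    castVec (∑ j, n j • v j) = ∑ j, (n j : ℝ) • castVec (v j) := by
  funext l
  simp only [castVec, Finset.sum_apply, Pi.smul_apply, smul_eq_mul]
  push_cast
  ring

lemma mem_coneFam_iff {m : ℕ} (v : Fin m → Fin m → ℤ) (B : Module.Basis (Fin m) ℝ (Fin m → ℝ))
    (hB : ∀ j, B j = castVec (v j)) (y : Fin m → ℝ) :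
    y ∈ coneFam v ↔ ∀ j, 0 ≤ B.repr y j := by
  constructor
  · rintro ⟨c, hc, rfl⟩ j
    have h1 : ∑ i, c i • castVec (v i) = ∑ i, c i • B i := by simp [hB]
    rw [h1]
    have h2 : B.repr (∑ i, c i • B i) j = c j := by
      simp [B.repr_sum_self, Finsupp.single_apply]
    rw [h2]; exact hc j
  · intro h
    refine ⟨fun j => B.repr y j, h, ?_⟩
    have := (B.sum_repr y).symm
    simp only [hB] at this
    exact this

lemma repr_intComb {m : ℕ} (v : Fin m → Fin m → ℤ) (B : Module.Basis (Fin m) ℝ (Fin m → ℝ))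
    (hB : ∀ j, B j = castVec (v j)) (n : Fin m → ℤ) (j : Fin m) :
    B.repr (castVec (∑ j', n j' • v j')) j = (n j : ℝ) := by
  rw [castVec_intComb]
  have h1 : ∑ j', ((n j' : ℝ)) • castVec (v j') = ∑ j', (n j' : ℝ) • B j' := by simp [hB]
  rw [h1]
  simp [B.repr_sum_self, Finsupp.single_apply]

lemma castVec_split {m : ℕ} (b : Fin m → ℤ) (l₀ : Fin m) :
    castVec b = (b l₀ : ℝ) • (Pi.single l₀ (1:ℝ) : Fin m → ℝ) + castVec (Function.update b l₀ 0) := by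
  funext l
  by_cases h : l = l₀
  · subst h; simp [castVec, Function.update_self]
  · simp [castVec, Function.update_of_ne h, Pi.single_apply, h]

lemma slab_count {m : ℕ} (φ : (Fin m → ℝ) →ₗ[ℝ] ℝ) (l₀ : Fin m)
    (ha : φ (Pi.single l₀ 1) ≠ 0) (κ : ℝ) :
    ∃ K : ℕ, ∀ t : ℕ,
      Set.ncard {b : Fin m → ℤ | (∀ l, |b l| ≤ (t:ℤ)) ∧ 0 ≤ φ (castVec b) ∧ φ (castVec b) < κ}
        ≤ K * (2*t+1)^(m-1) := by
  set a : ℝ := φ (Pi.single l₀ 1) with ha'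
  set K₀ : ℕ := ⌈|κ|/|a|⌉₊ + 1 with hK₀
  refine ⟨2*K₀+1, fun t => ?_⟩
  set S : Set (Fin m → ℤ) :=
    {b : Fin m → ℤ | (∀ l, |b l| ≤ (t:ℤ)) ∧ 0 ≤ φ (castVec b) ∧ φ (castVec b) < κ} with hS
  set r : (Fin m → ℤ) → ℝ := fun b => φ (castVec (Function.update b l₀ 0)) with hr
  have hsplit : ∀ b : Fin m → ℤ, φ (castVec b) = (b l₀ : ℝ) * a + r b := by
    intro b
    conv_lhs => rw [castVec_split b l₀]
    rw [map_add, map_smul]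
    simp [hr, smul_eq_mul, ha']
  set c : (Fin m → ℤ) → ℤ := fun b => ⌊-(r b)/a⌋ with hc
  have habs : 0 < |a| := abs_pos.mpr ha
  have hKbig : |κ|/|a| + 1 ≤ (⌈|κ|/|a|⌉₊ : ℝ) + 1 := by
    have := Nat.le_ceil (|κ|/|a|)
    linarith
  have hbound : ∀ b ∈ S, |b l₀ - c b| ≤ (K₀ : ℤ) := by
    intro b hb
    obtain ⟨-, h0, h1⟩ := hb
    rw [hsplit b] at h0 h1
    have hx : |(b l₀ : ℝ) * a + r b| ≤ |κ| := by
      rw [abs_le]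
      constructor
      · have : -(|κ|) ≤ 0 := neg_nonpos.mpr (abs_nonneg κ)
        linarith
      · calc (b l₀ : ℝ) * a + r b ≤ κ := le_of_lt h1
          _ ≤ |κ| := le_abs_self κ
    have hx2 : |(b l₀ : ℝ) - (-(r b)/a)| ≤ |κ|/|a| := by
      have heq : (b l₀:ℝ) - (-(r b)/a) = ((b l₀:ℝ)*a + r b)/a := by
        field_simp
        ring
      rw [heq, abs_div]
      gcongr
    have hfl1 : ((c b : ℝ)) ≤ -(r b)/a := Int.floor_le _
    have hfl2 : -(r b)/a < c b + 1 := Int.lt_floor_add_one _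
    rw [abs_le] at hx2
    have key : |((b l₀ - c b : ℤ) : ℝ)| ≤ (K₀ : ℝ) := by
      rw [hK₀]
      push_cast
      rw [abs_le]
      constructor <;> linarith [hx2.1, hx2.2, hfl1, hfl2, hKbig]
    exact_mod_cast key
  set Ψ : (Fin m → ℤ) → (Fin m → ℤ) :=
    fun b => Function.update b l₀ (b l₀ - c b + K₀) with hΨ
  set lo : Fin m → ℤ := Function.update (fun _ => -(t:ℤ)) l₀ 0 with hlo
  set hi : Fin m → ℤ := Function.update (fun _ => (t:ℤ)) l₀ (2*K₀) with hhi
  set T : Finset (Fin m → ℤ) := Finset.Icc lo hi with hT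
  have himg : Ψ '' S ⊆ ↑T := by
    rintro - ⟨b, hb, rfl⟩
    have hbox := hb.1
    have hb0 := hbound b hb
    rw [abs_le] at hb0
    simp only [hT, Finset.coe_Icc, Set.mem_Icc]
    constructor <;> intro l <;> by_cases h : l = l₀
    · subst h; simp only [hΨ, hlo, Function.update_self]; omega
    · simp only [hΨ, hlo, Function.update_of_ne h]
      have := abs_le.mp (hbox l); omega
    · subst h; simp only [hΨ, hhi, Function.update_self]; omega
    · simp only [hΨ, hhi, Function.update_of_ne h]
      have := abs_le.mp (hbox l); omega
  have hinj : Set.InjOn Ψ S := by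
    intro b hb b' hb' heq
    have hoff : ∀ l, l ≠ l₀ → b l = b' l := by
      intro l hl
      have := congrFun heq l
      simpa [hΨ, Function.update_of_ne hl] using this
    have hup : Function.update b l₀ 0 = Function.update b' l₀ 0 := by
      funext l
      by_cases h : l = l₀
      · subst h; simp
      · simp [Function.update_of_ne h, hoff l h]
    have hrc : c b = c b' := by simp [hc, hr, hup]
    have h0 := congrFun heq l₀
    simp only [hΨ, Function.update_self] at h0
    funext l
    by_cases h : l = l₀
    · subst h; omega
    · exact hoff l h
  have hfinT : (↑T : Set (Fin m → ℤ)).Finite := T.finite_toSet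
  have hSfin : S.Finite := by
    apply Set.Finite.subset (Finset.Icc (fun _ => -(t:ℤ)) (fun _ => (t:ℤ))).finite_toSet
    intro b hb
    simp only [Finset.coe_Icc, Set.mem_Icc, Pi.le_def]
    exact ⟨fun l => (abs_le.mp (hb.1 l)).1, fun l => (abs_le.mp (hb.1 l)).2⟩
  have hcount : S.ncard ≤ T.card := by
    calc S.ncard = (Ψ '' S).ncard := (Set.ncard_image_of_injOn hinj).symm
      _ ≤ (↑T : Set (Fin m → ℤ)).ncard := Set.ncard_le_ncard himg hfinT
      _ = T.card := by rw [Set.ncard_coe_finset]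
  have hcard : T.card = (2*K₀+1) * (2*t+1)^(m-1) := by
    rw [hT, Pi.card_Icc]
    rw [← Finset.mul_prod_erase Finset.univ _ (Finset.mem_univ l₀)]
    have h1 : (Finset.Icc (lo l₀) (hi l₀)).card = 2*K₀+1 := by
      simp [hlo, hhi, Int.card_Icc]
      omega
    have h2 : ∀ l ∈ Finset.univ.erase l₀, (Finset.Icc (lo l) (hi l)).card = 2*t+1 := by
      intro l hl
      have hne : l ≠ l₀ := (Finset.mem_erase.mp hl).1
      simp [hlo, hhi, Function.update_of_ne hne, Int.card_Icc]
      omega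
    rw [h1, Finset.prod_congr rfl h2, Finset.prod_const]
    congr 1
    rw [Finset.card_erase_of_mem (Finset.mem_univ l₀)]
    simp
  omega

lemma my_ncard_iUnion_le {α ι : Type*} [Fintype ι] (S : ι → Set α) (h : ∀ i, (S i).Finite) :
    (⋃ i, S i).ncard ≤ ∑ i, (S i).ncard := by
  classical
  have heq : (⋃ i, S i) = ↑(Finset.univ.biUnion fun i => (h i).toFinset) := by
    ext x; simp
  rw [heq, Set.ncard_coe_finset]
  refine le_trans Finset.card_biUnion_le ?_
  refine Finset.sum_le_sum fun i _ => ?_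
  rw [Set.ncard_eq_toFinset_card _ (h i)]

lemma exists_single_ne_zero {m : ℕ} (φ : (Fin m → ℝ) →ₗ[ℝ] ℝ) (y : Fin m → ℝ)
    (hy : φ y ≠ 0) : ∃ l, φ (Pi.single l (1:ℝ)) ≠ 0 := by
  by_contra h
  push_neg at h
  apply hy
  have hsum : y = ∑ l, y l • (Pi.single l (1:ℝ) : Fin m → ℝ) := by
    funext l'
    simp [Pi.single_apply, Finset.sum_apply]
  rw [hsum, map_sum]
  simp [map_smul, h]

theorem lattice_points_mostly_in_translated_subcones {m s : ℕ} (hm : 1 ≤ m) (hs : 1 ≤ s)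
    (W : Finset (Fin m → ℤ))
    (hdim : Submodule.span ℝ (castVec '' (W : Set (Fin m → ℤ))) = ⊤)
    (w : Fin s → Fin m → (Fin m → ℤ))
    (hmem : ∀ i j, w i j ∈ W)
    (hli : ∀ i, LinearIndependent ℝ fun j => castVec (w i j))
    (hcover : coneOfSet W = ⋃ i : Fin s, coneFam (w i))
    (Λ : AddSubgroup (Fin m → ℤ))
    (hΛfull : ∃ u : Fin m → (Fin m → ℤ), (∀ i, u i ∈ Λ) ∧
      LinearIndependent ℝ fun i => castVec (u i))
    (hWΛ : ∀ i j, w i j ∈ Λ)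
    (k : Fin s → Fin m → ℕ) :
    Filter.Tendsto (fun t : ℕ =>
      (Set.ncard {b : Fin m → ℤ | (∀ i, |b i| ≤ (t : ℤ)) ∧ b ∈ Λ ∧
          ∃ i : Fin s, castVec b ∈
            (fun y => y + castVec (∑ j, (k i j : ℤ) • w i j)) '' coneFam (w i)} : ℝ) /
      (Set.ncard {b : Fin m → ℤ | (∀ i, |b i| ≤ (t : ℤ)) ∧ b ∈ Λ ∧
          ∃ i : Fin s, castVec b ∈ coneFam (w i)} : ℝ))
      Filter.atTop (nhds 1) := by
  classical
  have hne : Nonempty (Fin m) := Fin.pos_iff_nonempty.mp hm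
  set i₀ : Fin s := ⟨0, hs⟩ with hi₀
  -- bases adapted to each subcone
  have hBex : ∀ i : Fin s, ∃ B : Module.Basis (Fin m) ℝ (Fin m → ℝ), ∀ j, B j = castVec (w i j) := by
    intro i
    exact ⟨basisOfLinearIndependentOfCardEqFinrank (hli i) (by simp), fun j => by
      rw [coe_basisOfLinearIndependentOfCardEqFinrank]⟩
  choose B hB using hBex
  -- the two set families
  set NN : ℕ → Set (Fin m → ℤ) := fun t => {b : Fin m → ℤ | (∀ i, |b i| ≤ (t : ℤ)) ∧ b ∈ Λ ∧
      ∃ i : Fin s, castVec b ∈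
        (fun y => y + castVec (∑ j, (k i j : ℤ) • w i j)) '' coneFam (w i)} with hNN
  set DD : ℕ → Set (Fin m → ℤ) := fun t => {b : Fin m → ℤ | (∀ i, |b i| ≤ (t : ℤ)) ∧ b ∈ Λ ∧
      ∃ i : Fin s, castVec b ∈ coneFam (w i)} with hDD
  -- membership in translated cone via coordinates
  have htrans : ∀ (i : Fin s) (y : Fin m → ℝ),
      (y ∈ (fun y => y + castVec (∑ j, (k i j : ℤ) • w i j)) '' coneFam (w i)) ↔
      ∀ j, (k i j : ℝ) ≤ (B i).repr y j := by
    intro i y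
    constructor
    · rintro ⟨x, hx, rfl⟩ j
      rw [map_add]
      simp only [Finsupp.add_apply]
      have hz := repr_intComb (w i) (B i) (hB i) (fun j => (k i j : ℤ)) j
      rw [hz]
      have hx0 := (mem_coneFam_iff (w i) (B i) (hB i) x).mp hx j
      push_cast
      linarith
    · intro h
      refine ⟨y - castVec (∑ j, (k i j : ℤ) • w i j), ?_, by simp⟩
      rw [mem_coneFam_iff (w i) (B i) (hB i)]
      intro j
      rw [map_sub]
      simp only [Finsupp.sub_apply]
      have hz := repr_intComb (w i) (B i) (hB i) (fun j => (k i j : ℤ)) j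
      rw [hz]
      have := h j
      push_cast
      linarith
  -- numerator ⊆ denominator
  have hND : ∀ t, NN t ⊆ DD t := by
    rintro t b ⟨hbox, hbΛ, i, hi⟩
    refine ⟨hbox, hbΛ, i, ?_⟩
    rw [mem_coneFam_iff (w i) (B i) (hB i)]
    intro j
    exact le_trans (by positivity) ((htrans i (castVec b)).mp hi j)
  -- finiteness
  have hDfin : ∀ t, (DD t).Finite := by
    intro t
    apply Set.Finite.subset (Finset.Icc (fun _ => -(t:ℤ)) (fun _ => (t:ℤ))).finite_toSet
    intro b hb
    simp only [Finset.coe_Icc, Set.mem_Icc, Pi.le_def]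
    exact ⟨fun l => (abs_le.mp (hb.1 l)).1, fun l => (abs_le.mp (hb.1 l)).2⟩
  have hNfin : ∀ t, (NN t).Finite := fun t => (hDfin t).subset (hND t)
  -- lower bound on the denominator count
  set C₂ : ℕ := 1 + ∑ j, ∑ l, (w i₀ j l).natAbs with hC₂
  have hC₂pos : 0 < C₂ := by positivity
  have hlower : ∀ t : ℕ, (t / C₂ + 1)^m ≤ (DD t).ncard := by
    intro t
    set M : ℕ := t / C₂ with hM
    set G : Finset (Fin m → ℤ) := Finset.Icc 0 (fun _ => (M:ℤ)) with hG
    set g : (Fin m → ℤ) → (Fin m → ℤ) := fun n => ∑ j, n j • w i₀ j with hg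
    have hginj : Set.InjOn g ↑G := by
      intro n _ n' _ heq
      funext j
      have hcast : castVec (∑ j', n j' • w i₀ j') = castVec (∑ j', n' j' • w i₀ j') := by
        rw [hg] at heq; exact congrArg castVec heq
      have h1 := repr_intComb (w i₀) (B i₀) (hB i₀) n j
      have h2 := repr_intComb (w i₀) (B i₀) (hB i₀) n' j
      rw [hcast, h2] at h1
      exact_mod_cast h1.symm
    have hsub : ↑(G.image g) ⊆ DD t := by
      intro b hb
      simp only [Finset.coe_image, Set.mem_image, Finset.mem_coe] at hb
      obtain ⟨n, hn, rfl⟩ := hb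
      rw [Finset.mem_Icc] at hn
      have hn0 : ∀ j, 0 ≤ n j := fun j => hn.1 j
      have hnM : ∀ j, n j ≤ (M:ℤ) := fun j => hn.2 j
      refine ⟨?_, ?_, i₀, ?_⟩
      · intro l
        have hb1 : |(g n) l| ≤ ∑ j, |n j * w i₀ j l| := by
          rw [hg]; simp only [Finset.sum_apply, Pi.smul_apply, smul_eq_mul]
          exact Finset.abs_sum_le_sum_abs _ _
        have hb2 : ∑ j, |n j * w i₀ j l| ≤ ∑ j, (M:ℤ) * |w i₀ j l| := by
          refine Finset.sum_le_sum fun j _ => ?_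
          rw [abs_mul, abs_of_nonneg (hn0 j)]
          exact mul_le_mul_of_nonneg_right (hnM j) (abs_nonneg _)
        have hb4 : ∑ j, |w i₀ j l| ≤ (C₂ : ℤ) := by
          rw [hC₂]
          push_cast
          have hstep : ∀ j ∈ Finset.univ, |w i₀ j l| ≤ ∑ l', |w i₀ j l'| := fun j _ =>
            Finset.single_le_sum (f := fun l' => |w i₀ j l'|) (fun _ _ => abs_nonneg _)
              (Finset.mem_univ l)
          have := Finset.sum_le_sum hstep
          linarith
        have hMC : (M:ℤ) * (C₂:ℤ) ≤ (t:ℤ) := by exact_mod_cast Nat.div_mul_le_self t C₂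
        calc |(g n) l| ≤ ∑ j, (M:ℤ) * |w i₀ j l| := le_trans hb1 hb2
          _ = (M:ℤ) * ∑ j, |w i₀ j l| := by rw [Finset.mul_sum]
          _ ≤ (M:ℤ) * (C₂:ℤ) := mul_le_mul_of_nonneg_left hb4 (by positivity)
          _ ≤ (t:ℤ) := hMC
      · exact AddSubgroup.sum_mem Λ fun j _ => AddSubgroup.zsmul_mem Λ (hWΛ i₀ j) (n j)
      · rw [hg]
        exact ⟨fun j => (n j : ℝ), fun j => by simp; exact_mod_cast hn0 j, castVec_intComb _ n⟩
    have hGcard : G.card = (M+1)^m := by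
      rw [hG, Pi.card_Icc]
      have hcc : ∀ l : Fin m,
          (Finset.Icc ((0 : Fin m → ℤ) l) ((fun _ => (M:ℤ)) l)).card = M+1 := by
        intro l; simp [Int.card_Icc]
      rw [Finset.prod_congr rfl (fun l _ => hcc l), Finset.prod_const]
      simp
    calc (t / C₂ + 1)^m = G.card := hGcard.symm
      _ = (G.image g).card := (Finset.card_image_of_injOn hginj).symm
      _ = (↑(G.image g) : Set _).ncard := (Set.ncard_coe_finset _).symm
      _ ≤ (DD t).ncard := Set.ncard_le_ncard hsub (hDfin t)
  -- upper bound on the difference count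
  obtain ⟨C₁, hupper⟩ : ∃ C₁ : ℕ, ∀ t : ℕ,
      (DD t \ NN t).ncard ≤ C₁ * (2*t+1)^(m-1) := by
    have hφ : ∀ (i : Fin s) (j : Fin m), ∃ l₀ : Fin m,
        ((B i).coord j) (Pi.single l₀ (1:ℝ)) ≠ 0 := by
      intro i j
      apply exists_single_ne_zero ((B i).coord j) (B i j)
      simp
    choose lf hlf using hφ
    have hKex : ∀ (i : Fin s) (j : Fin m), ∃ K : ℕ, ∀ t : ℕ,
        Set.ncard {b : Fin m → ℤ | (∀ l, |b l| ≤ (t:ℤ)) ∧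
          0 ≤ ((B i).coord j) (castVec b) ∧ ((B i).coord j) (castVec b) < (k i j : ℝ)}
          ≤ K * (2*t+1)^(m-1) :=
      fun i j => slab_count ((B i).coord j) (lf i j) (hlf i j) (k i j : ℝ)
    choose K hK using hKex
    refine ⟨∑ p : Fin s × Fin m, K p.1 p.2, fun t => ?_⟩
    set Sl : Fin s × Fin m → Set (Fin m → ℤ) := fun p =>
      {b : Fin m → ℤ | (∀ l, |b l| ≤ (t:ℤ)) ∧
        0 ≤ ((B p.1).coord p.2) (castVec b) ∧
        ((B p.1).coord p.2) (castVec b) < (k p.1 p.2 : ℝ)} with hSl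
    have hSlfin : ∀ p, (Sl p).Finite := by
      intro p
      apply Set.Finite.subset (Finset.Icc (fun _ => -(t:ℤ)) (fun _ => (t:ℤ))).finite_toSet
      intro b hb
      simp only [Finset.coe_Icc, Set.mem_Icc, Pi.le_def]
      exact ⟨fun l => (abs_le.mp (hb.1 l)).1, fun l => (abs_le.mp (hb.1 l)).2⟩
    have hsub : DD t \ NN t ⊆ ⋃ p, Sl p := by
      rintro b ⟨⟨hbox, hbΛ, i, hcone⟩, hnot⟩
      have hnotN : ¬ (castVec b ∈
          (fun y => y + castVec (∑ j, (k i j : ℤ) • w i j)) '' coneFam (w i)) :=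
        fun hmem' => hnot ⟨hbox, hbΛ, i, hmem'⟩
      rw [htrans i] at hnotN
      push_neg at hnotN
      obtain ⟨j, hj⟩ := hnotN
      have h0 := (mem_coneFam_iff (w i) (B i) (hB i) (castVec b)).mp hcone j
      refine Set.mem_iUnion.mpr ⟨(i, j), hbox, ?_, ?_⟩
      · simpa [Module.Basis.coord_apply] using h0
      · simpa [Module.Basis.coord_apply] using hj
    calc (DD t \ NN t).ncard ≤ (⋃ p, Sl p).ncard :=
          Set.ncard_le_ncard hsub (Set.finite_iUnion hSlfin)
      _ ≤ ∑ p : Fin s × Fin m, (Sl p).ncard := my_ncard_iUnion_le Sl hSlfin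
      _ ≤ ∑ p : Fin s × Fin m, K p.1 p.2 * (2*t+1)^(m-1) :=
          Finset.sum_le_sum fun p _ => hK p.1 p.2 t
      _ = (∑ p : Fin s × Fin m, K p.1 p.2) * (2*t+1)^(m-1) := by
          rw [Finset.sum_mul]
  -- conclusion
  have hDpos : ∀ t : ℕ, 0 < (DD t).ncard := by
    intro t
    have := hlower t
    have h1 : 0 < (t / C₂ + 1)^m := by positivity
    omega
  have hNcard : ∀ t : ℕ, (NN t).ncard = (DD t).ncard - (DD t \ NN t).ncard := by
    intro t
    have hd := Set.ncard_diff (hND t) (hNfin t)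
    have hle : (NN t).ncard ≤ (DD t).ncard := Set.ncard_le_ncard (hND t) (hDfin t)
    omega
  have hEleD : ∀ t : ℕ, (DD t \ NN t).ncard ≤ (DD t).ncard := by
    intro t
    exact Set.ncard_le_ncard Set.diff_subset (hDfin t)
  set E : ℕ → ℝ := fun t => ((DD t \ NN t).ncard : ℝ) / ((DD t).ncard : ℝ) with hE
  have hfun : ∀ t : ℕ, ((NN t).ncard : ℝ) / ((DD t).ncard : ℝ) = 1 - E t := by
    intro t
    have hdpos : (0:ℝ) < ((DD t).ncard : ℝ) := by exact_mod_cast hDpos t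
    rw [hE]
    field_simp
    rw [hNcard t]
    push_cast [Nat.cast_sub (hEleD t)]
    ring
  have hE0 : Filter.Tendsto E Filter.atTop (nhds 0) := by
    set C : ℝ := (C₁ : ℝ) * 3^(m-1) * (C₂:ℝ)^m with hCdef
    apply squeeze_zero' (t₀ := Filter.atTop)
    · filter_upwards with t
      positivity
    · filter_upwards [Filter.eventually_ge_atTop 1] with t ht
      show E t ≤ C / (t:ℝ)
      have htpos : (0:ℝ) < (t:ℝ) := by exact_mod_cast ht
      have hnum : ((DD t \ NN t).ncard : ℝ) ≤ (C₁:ℝ) * 3^(m-1) * (t:ℝ)^(m-1) := by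
        have h1 : ((DD t \ NN t).ncard : ℝ) ≤ (C₁:ℝ) * (2*(t:ℝ)+1)^(m-1) := by
          exact_mod_cast hupper t
        have h2 : (2*(t:ℝ)+1)^(m-1) ≤ (3*(t:ℝ))^(m-1) := by
          apply pow_le_pow_left₀ (by positivity)
          have ht1 : (1:ℝ) ≤ (t:ℝ) := by exact_mod_cast ht
          linarith
        calc ((DD t \ NN t).ncard : ℝ) ≤ (C₁:ℝ) * (2*(t:ℝ)+1)^(m-1) := h1
          _ ≤ (C₁:ℝ) * (3*(t:ℝ))^(m-1) := by
              apply mul_le_mul_of_nonneg_left h2 (by positivity)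
          _ = (C₁:ℝ) * 3^(m-1) * (t:ℝ)^(m-1) := by rw [mul_pow]; ring
      have hden : ((t:ℝ)/(C₂:ℝ))^m ≤ ((DD t).ncard : ℝ) := by
        have hc2 : (0:ℝ) < (C₂:ℝ) := by exact_mod_cast hC₂pos
        have h1 : (t:ℝ)/(C₂:ℝ) ≤ ((t / C₂ + 1 : ℕ) : ℝ) := by
          rw [div_le_iff₀ hc2]
          have h2 : t < C₂ * (t / C₂ + 1) := by
            calc t = C₂ * (t/C₂) + t % C₂ := (Nat.div_add_mod t C₂).symm
              _ < C₂ * (t/C₂) + C₂ := by have := Nat.mod_lt t hC₂pos; omega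
              _ = C₂ * (t/C₂ + 1) := by ring
          have h3 : (t:ℝ) < (C₂:ℝ) * ((t / C₂ + 1 : ℕ):ℝ) := by exact_mod_cast h2
          push_cast at h3 ⊢
          linarith
        calc ((t:ℝ)/(C₂:ℝ))^m ≤ (((t / C₂ + 1 : ℕ) : ℝ))^m := by
              apply pow_le_pow_left₀ (by positivity) h1
          _ ≤ ((DD t).ncard : ℝ) := by exact_mod_cast hlower t
      have hdpos : (0:ℝ) < ((t:ℝ)/(C₂:ℝ))^m := by
        have hc2 : (0:ℝ) < (C₂:ℝ) := by exact_mod_cast hC₂pos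
        positivity
      have hstep : E t ≤ ((C₁:ℝ) * 3^(m-1) * (t:ℝ)^(m-1)) / ((t:ℝ)/(C₂:ℝ))^m := by
        rw [hE]
        apply div_le_div₀ (by positivity) hnum hdpos hden
      have heq : ((C₁:ℝ) * 3^(m-1) * (t:ℝ)^(m-1)) / ((t:ℝ)/(C₂:ℝ))^m = C / (t:ℝ) := by
        have hc2 : (0:ℝ) < (C₂:ℝ) := by exact_mod_cast hC₂pos
        have hpow : (t:ℝ)^m = (t:ℝ)^(m-1) * (t:ℝ) := by
          rw [← pow_succ, Nat.sub_add_cancel hm]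
        rw [hCdef, div_pow, hpow]
        field_simp
      rw [heq] at hstep
      exact hstep
    · exact tendsto_const_div_atTop_nhds_zero_nat C
  have : Filter.Tendsto (fun t : ℕ => ((NN t).ncard : ℝ) / ((DD t).ncard : ℝ))
      Filter.atTop (nhds 1) := by
    have h1 : (fun t : ℕ => ((NN t).ncard : ℝ) / ((DD t).ncard : ℝ))
        = fun t => 1 - E t := funext hfun
    rw [h1]
    have := Filter.Tendsto.const_sub (1:ℝ) hE0
    simpa using this
  exact this
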